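/- Suppose φ : ℝ → ℝ is even, continuous, integrable, φ(0) = 1, and its Fourier transform φ̂ is nonnegative, integrable, and real-analytic on ℝ. Let λ > 0 and let n be a positive integer. If 0 < r ≤ π/(2λ), then min( ∫_{-r}^{r} (P̂_n(λ, ·))₋(ω) dω , ∫_{-r}^{r} (P̂_n(λ, ·))₊(ω) dω ) ≤ 4√(2π) · Σ_{k>n} |a_k|. -/

import Mathlib

open MeasureTheory Real

/-- Fourier transform normalized as `f̂(ω) = (1/√(2π)) ∫ f(x) e^{-iωx} dx`. -/
noncomputable def FT (f : ℝ → ℝ) (w : ℝ) : ℂ :=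
  (1 / Real.sqrt (2 * Real.pi)) * ∫ x : ℝ, (f x : ℂ) * Complex.exp (-(Complex.I * w * x))

/-- The Fourier cosine coefficients of the auxiliary function `H`. -/
noncomputable def a : ℕ → ℝ
  | 0 => 3 / 4
  | 1 => 4 / (3 * Real.pi)
  | 2 => -(1 / 4)
  | k => -4 * Real.sin (k * Real.pi / 2) / (Real.pi * k * (k ^ 2 - 4))

/-- `A_n(λ) = -Σ_{k=1}^n a_k φ(λk)`. -/
noncomputable def An (φ : ℝ → ℝ) (lam : ℝ) (n : ℕ) : ℝ :=
  -∑ k ∈ Finset.Icc 1 n, a k * φ (lam * k)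

/-- `P_n(λ, x) = 2 A_n(λ) φ(x) + Σ_{k=1}^n a_k (φ(x + λk) + φ(x - λk))`. -/
noncomputable def Pn (φ : ℝ → ℝ) (lam : ℝ) (n : ℕ) (x : ℝ) : ℝ :=
  2 * An φ lam n * φ x +
    ∑ k ∈ Finset.Icc 1 n, a k * (φ (x + lam * k) + φ (x - lam * k))


open intervalIntegral

lemma a_succ3 (k : ℕ) : a (k + 3) =
    -4 * Real.sin ((k + 3 : ℕ) * Real.pi / 2) / (Real.pi * (k + 3 : ℕ) * (((k + 3 : ℕ) : ℝ) ^ 2 - 4)) := rfl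

lemma a_bound (k : ℕ) : |a (k + 3)| ≤ 1 / ((k:ℝ) + 3) ^ 2 := by
  have hm : ((k + 3 : ℕ) : ℝ) = (k:ℝ) + 3 := by push_cast; ring
  have hk : (0:ℝ) ≤ (k:ℝ) := k.cast_nonneg
  have hpi := Real.pi_gt_three
  have hden : (0:ℝ) < Real.pi * ((k:ℝ) + 3) * (((k:ℝ) + 3) ^ 2 - 4) := by nlinarith [mul_nonneg hk hk, mul_pos (mul_pos Real.pi_pos (show (0:ℝ) < (k:ℝ)+3 by linarith)) (show (0:ℝ) < ((k:ℝ)+3)^2 - 4 by nlinarith [mul_nonneg hk hk])]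
  have hs : |Real.sin (((k:ℝ) + 3) * Real.pi / 2)| ≤ 1 := Real.abs_sin_le_one _
  rw [a_succ3, hm, abs_div, abs_of_pos hden, abs_mul, show |(-4:ℝ)| = 4 by norm_num]
  rw [div_le_div_iff₀ hden (by positivity)]
  nlinarith [mul_nonneg hk hk, mul_nonneg (mul_nonneg hk hk) hk]

lemma summable_abs_a : Summable (fun k : ℕ => |a k|) := by
  rw [← summable_nat_add_iff 3]
  have h2 : Summable (fun k : ℕ => 1 / ((k:ℝ) + 3) ^ 2) := by
    have h0 : Summable (fun n : ℕ => 1 / (n:ℝ) ^ 2) :=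
      summable_one_div_nat_pow.mpr (by norm_num)
    have := (summable_nat_add_iff (f := fun n : ℕ => 1 / (n:ℝ) ^ 2) 3).mpr h0
    exact this.congr (fun n => by push_cast; ring)
  exact Summable.of_nonneg_of_le (fun k => abs_nonneg _) (fun k => a_bound k) h2

lemma summable_a : Summable a := summable_abs_iff.mp summable_abs_a


/-- The even `2π`-periodic function: `1` on `[-π/2, π/2]`, `sin²` on the rest. -/
noncomputable def Hr (x : ℝ) : ℝ := Real.sin x ^ 2 + Real.cos x * max (Real.cos x) 0

lemma Hr_continuous : Continuous Hr := by
  unfold Hr; fun_prop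

lemma Hr_periodic : Function.Periodic Hr (2 * π) := by
  intro x; simp [Hr, Real.sin_add_two_pi, Real.cos_add_two_pi]

lemma Hr_even (x : ℝ) : Hr (-x) = Hr x := by
  simp [Hr]

lemma Hr_one {x : ℝ} (h1 : -(π/2) ≤ x) (h2 : x ≤ π/2) : Hr x = 1 := by
  have hc : 0 ≤ Real.cos x := Real.cos_nonneg_of_mem_Icc ⟨h1, h2⟩
  rw [Hr, max_eq_left hc]
  nlinarith [Real.sin_sq_add_cos_sq x]

lemma Hr_sin {x : ℝ} (hc : Real.cos x ≤ 0) : Hr x = Real.sin x ^ 2 := by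
  rw [Hr, max_eq_right hc]; ring

/-- `∫ cos (c x)` over an interval. -/
lemma integral_cos_mul' {c : ℝ} (hc : c ≠ 0) (s t : ℝ) :
    ∫ x in s..t, Real.cos (c * x) = (Real.sin (c * t) - Real.sin (c * s)) / c := by
  have h := intervalIntegral.integral_comp_mul_right Real.cos (a := s) (b := t) hc
  simp only [integral_cos] at h
  calc ∫ x in s..t, Real.cos (c * x) = ∫ x in s..t, Real.cos (x * c) := by
        simp_rw [mul_comm]
    _ = (Real.sin (c * t) - Real.sin (c * s)) / c := by
        rw [h, smul_eq_mul, mul_comm t c, mul_comm s c]; ring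

lemma sin_sq_mul_cos (c x : ℝ) :
    Real.cos (c * x) * Real.sin x ^ 2 =
      (1/2) * Real.cos (c * x) - (1/4) * Real.cos ((c+2) * x) - (1/4) * Real.cos ((c-2) * x) := by
  rw [show (c+2) * x = c*x + 2*x by ring, show (c-2) * x = c*x - 2*x by ring,
    Real.cos_add, Real.cos_sub, Real.cos_two_mul, Real.sin_two_mul, Real.sin_sq]
  ring

/-- The basic cosine integral against `Hr` over a period. -/
noncomputable def Rn (c : ℝ) : ℝ := ∫ x in (-π)..π, Real.cos (c * x) * Hr x

lemma Rn_split (c : ℝ) :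
    Rn c = (∫ x in (-π)..(-(π/2)), Real.cos (c * x) * Real.sin x ^ 2)
      + (∫ x in (-(π/2))..(π/2), Real.cos (c * x))
      + (∫ x in (π/2)..π, Real.cos (c * x) * Real.sin x ^ 2) := by
  have hcont : Continuous fun x => Real.cos (c * x) * Hr x := by
    have := Hr_continuous; fun_prop
  have hi : ∀ u v : ℝ, IntervalIntegrable (fun x => Real.cos (c * x) * Hr x) volume u v :=
    fun u v => hcont.intervalIntegrable u v
  have e1 : Rn c = (∫ x in (-π)..(-(π/2)), Real.cos (c * x) * Hr x)
      + (∫ x in (-(π/2))..(π/2), Real.cos (c * x) * Hr x)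
      + (∫ x in (π/2)..π, Real.cos (c * x) * Hr x) := by
    rw [Rn, ← intervalIntegral.integral_add_adjacent_intervals (b := -(π/2)) (hi _ _) (hi _ _),
      ← intervalIntegral.integral_add_adjacent_intervals (a := -(π/2)) (b := π/2) (hi _ _) (hi _ _)]
    ring
  rw [e1]
  have hpi := Real.pi_pos
  congr 1
  · congr 1
    · -- left piece : cos x ≤ 0 there
      apply intervalIntegral.integral_congr
      intro x hx
      rw [Set.uIcc_of_le (by linarith)] at hx
      have hcos : Real.cos x ≤ 0 := by
        have : Real.cos (-x) ≤ 0 :=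
          Real.cos_nonpos_of_pi_div_two_le_of_le (by linarith [hx.2]) (by linarith [hx.1])
        rwa [Real.cos_neg] at this
      simp [Hr_sin hcos]
    · apply intervalIntegral.integral_congr
      intro x hx
      rw [Set.uIcc_of_le (by linarith)] at hx
      simp [Hr_one hx.1 hx.2]
  · apply intervalIntegral.integral_congr
    intro x hx
    rw [Set.uIcc_of_le (by linarith)] at hx
    have hcos : Real.cos x ≤ 0 :=
      Real.cos_nonpos_of_pi_div_two_le_of_le hx.1 (by linarith [hx.2])
    simp [Hr_sin hcos]

/-- Side integrals of `cos(cx) sin² x`, given the vanishing of `sin(cπ)`. -/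
lemma side_integral (c s t : ℝ) (h0 : c ≠ 0) (h2 : c + 2 ≠ 0) (h2' : c - 2 ≠ 0) :
    ∫ x in s..t, Real.cos (c * x) * Real.sin x ^ 2 =
      (1/2) * ((Real.sin (c*t) - Real.sin (c*s))/c)
      - (1/4) * ((Real.sin ((c+2)*t) - Real.sin ((c+2)*s))/(c+2))
      - (1/4) * ((Real.sin ((c-2)*t) - Real.sin ((c-2)*s))/(c-2)) := by
  have h1 : (∫ x in s..t, Real.cos (c * x) * Real.sin x ^ 2)
      = ∫ x in s..t, ((1/2) * Real.cos (c * x) - (1/4) * Real.cos ((c+2) * x)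
          - (1/4) * Real.cos ((c-2) * x)) := by
    apply intervalIntegral.integral_congr
    intro x _; exact sin_sq_mul_cos c x
  rw [h1, intervalIntegral.integral_sub, intervalIntegral.integral_sub,
    intervalIntegral.integral_const_mul, intervalIntegral.integral_const_mul,
    intervalIntegral.integral_const_mul, integral_cos_mul' h0, integral_cos_mul' h2,
    integral_cos_mul' h2']
  · exact ((continuous_const.mul (Real.continuous_cos.comp (by fun_prop))).intervalIntegrable _ _)
  · exact ((continuous_const.mul (Real.continuous_cos.comp (by fun_prop))).intervalIntegrable _ _)
  · apply IntervalIntegrable.sub <;>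
      exact ((continuous_const.mul (Real.continuous_cos.comp (by fun_prop))).intervalIntegrable _ _)
  · exact ((continuous_const.mul (Real.continuous_cos.comp (by fun_prop))).intervalIntegrable _ _)

lemma Rn_eval {c : ℝ} (h0 : c ≠ 0) (h2 : c + 2 ≠ 0) (h2' : c - 2 ≠ 0)
    (hπ : Real.sin (c * π) = 0) :
    Rn c = -4 * Real.sin (c * (π/2)) / (c * (c^2 - 4)) := by
  have e1 : Real.sin (c * -(π/2)) = -Real.sin (c * (π/2)) := by
    rw [show c * -(π/2) = -(c*(π/2)) by ring, Real.sin_neg]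
  have e3 : Real.sin (c * -π) = 0 := by
    rw [show c * -π = -(c*π) by ring, Real.sin_neg, hπ, neg_zero]
  have e4 : Real.sin ((c+2) * π) = 0 := by
    rw [show (c+2)*π = c*π + 2*π by ring, Real.sin_add_two_pi, hπ]
  have e5 : Real.sin ((c+2) * -π) = 0 := by
    rw [show (c+2)*(-π) = -(c*π + 2*π) by ring, Real.sin_neg, Real.sin_add_two_pi, hπ, neg_zero]
  have e6 : Real.sin ((c+2) * (π/2)) = -Real.sin (c*(π/2)) := by
    rw [show (c+2)*(π/2) = c*(π/2) + π by ring, Real.sin_add_pi]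
  have e7 : Real.sin ((c+2) * -(π/2)) = Real.sin (c*(π/2)) := by
    rw [show (c+2)*(-(π/2)) = -(c*(π/2) + π) by ring, Real.sin_neg, Real.sin_add_pi, neg_neg]
  have e8 : Real.sin ((c-2) * π) = 0 := by
    rw [show (c-2)*π = c*π - 2*π by ring, Real.sin_sub_two_pi, hπ]
  have e9 : Real.sin ((c-2) * -π) = 0 := by
    rw [show (c-2)*(-π) = -(c*π - 2*π) by ring, Real.sin_neg, Real.sin_sub_two_pi, hπ, neg_zero]
  have e10 : Real.sin ((c-2) * (π/2)) = -Real.sin (c*(π/2)) := by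
    rw [show (c-2)*(π/2) = c*(π/2) - π by ring, Real.sin_sub_pi]
  have e11 : Real.sin ((c-2) * -(π/2)) = Real.sin (c*(π/2)) := by
    rw [show (c-2)*(-(π/2)) = -(c*(π/2) - π) by ring, Real.sin_neg, Real.sin_sub_pi, neg_neg]
  rw [Rn_split, side_integral c (-π) (-(π/2)) h0 h2 h2', side_integral c (π/2) π h0 h2 h2',
    integral_cos_mul' h0, e1, hπ, e3, e4, e5, e6, e7, e8, e9, e10, e11,
    show c*(c^2-4) = c*(c+2)*(c-2) by ring]
  field_simp
  ring

lemma Rn_zero : Rn 0 = 3 * π / 2 := by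
  rw [Rn_split]
  simp_rw [zero_mul, Real.cos_zero, one_mul]
  rw [integral_sin_sq, integral_sin_sq, integral_one]
  simp [Real.sin_pi, Real.cos_pi, Real.sin_pi_div_two, Real.cos_pi_div_two]
  ring

lemma Rn_two : Rn 2 = -(π/4) := by
  have h1 : ∀ s t : ℝ, (∫ x in s..t, Real.cos (2*x) * Real.sin x^2)
      = (1/2)*((Real.sin (2*t) - Real.sin (2*s))/2) - (1/4)*((Real.sin (4*t) - Real.sin (4*s))/4)
        - (1/4)*(t - s) := by
    intro s t
    have hcongr : (∫ x in s..t, Real.cos (2*x) * Real.sin x^2)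
        = ∫ x in s..t, ((1/2) * Real.cos (2*x) - (1/4)*Real.cos (4*x) - (1/4)) := by
      apply intervalIntegral.integral_congr
      intro x _
      show Real.cos (2*x) * Real.sin x^2 = 1/2 * Real.cos (2*x) - 1/4*Real.cos (4*x) - 1/4
      rw [sin_sq_mul_cos]
      norm_num [Real.cos_zero]
    rw [hcongr, intervalIntegral.integral_sub, intervalIntegral.integral_sub,
      intervalIntegral.integral_const_mul, intervalIntegral.integral_const_mul,
      integral_cos_mul' (by norm_num : (2:ℝ) ≠ 0), integral_cos_mul' (by norm_num : (4:ℝ) ≠ 0),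
      intervalIntegral.integral_const]
    · simp [smul_eq_mul]; ring
    · exact ((continuous_const.mul (Real.continuous_cos.comp (by fun_prop))).intervalIntegrable _ _)
    · exact ((continuous_const.mul (Real.continuous_cos.comp (by fun_prop))).intervalIntegrable _ _)
    · apply IntervalIntegrable.sub <;>
        exact ((continuous_const.mul (Real.continuous_cos.comp (by fun_prop))).intervalIntegrable _ _)
    · exact intervalIntegrable_const
  rw [Rn_split, h1, h1, integral_cos_mul' (by norm_num : (2:ℝ) ≠ 0)]
  have v1 : Real.sin (2 * π) = 0 := Real.sin_two_pi
  have v2 : Real.sin (2 * -π) = 0 := by rw [show (2:ℝ) * -π = -(2*π) by ring, Real.sin_neg, v1, neg_zero]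
  have v3 : Real.sin (2 * (π/2)) = 0 := by rw [show (2:ℝ)*(π/2) = π by ring, Real.sin_pi]
  have v4 : Real.sin (2 * -(π/2)) = 0 := by rw [show (2:ℝ) * -(π/2) = -π by ring, Real.sin_neg, Real.sin_pi, neg_zero]
  have v5 : Real.sin (4 * π) = 0 := by rw [show (4:ℝ)*π = 2*π + 2*π by ring, Real.sin_add_two_pi, v1]
  have v6 : Real.sin (4 * -π) = 0 := by rw [show (4:ℝ) * -π = -(2*π + 2*π) by ring, Real.sin_neg, Real.sin_add_two_pi, v1, neg_zero]
  have v7 : Real.sin (4 * (π/2)) = 0 := by rw [show (4:ℝ)*(π/2) = 2*π by ring, v1]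
  have v8 : Real.sin (4 * -(π/2)) = 0 := by rw [show (4:ℝ) * -(π/2) = -(2*π) by ring, Real.sin_neg, v1, neg_zero]
  rw [v1, v2, v3, v4, v5, v6, v7, v8]
  ring

lemma Rn_neg (c : ℝ) : Rn (-c) = Rn c := by
  unfold Rn
  have h : ∀ x : ℝ, Real.cos (-c * x) = Real.cos (c * x) := fun x => by
    rw [show -c*x = -(c*x) by ring, Real.cos_neg]
  simp_rw [h]

open Complex in
lemma exp_ofReal_mul_I (θ : ℝ) :
    Complex.exp ((θ:ℂ) * Complex.I) = ((Real.cos θ : ℝ) : ℂ) + ((Real.sin θ : ℝ) : ℂ) * Complex.I := by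
  rw [Complex.exp_mul_I, Complex.ofReal_cos, Complex.ofReal_sin]

lemma integral_odd_vanish {f : ℝ → ℝ} (hf : Continuous f) (hodd : ∀ x, f (-x) = -f x) :
    ∫ x in (-π)..π, f x = 0 := by
  have h1 : ∫ x in (0:ℝ)..π, f (-x) = ∫ x in (-π)..(0:ℝ), f x := by
    simpa using intervalIntegral.integral_comp_neg (a := (0:ℝ)) (b := π) f
  have h2 : ∫ x in (0:ℝ)..π, f (-x) = -∫ x in (0:ℝ)..π, f x := by
    simp_rw [hodd]
    exact intervalIntegral.integral_neg
  rw [← intervalIntegral.integral_add_adjacent_intervals (b := (0:ℝ))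
    (hf.intervalIntegrable _ _) (hf.intervalIntegrable _ _), ← h1, h2]
  ring

noncomputable def Hcper : Function.Periodic (fun x : ℝ => ((Hr x : ℝ) : ℂ)) (2 * π) :=
  fun x => by simp [Hr_periodic x]

noncomputable def HF : C(AddCircle (2 * π), ℂ) :=
  ⟨Hcper.lift, continuous_coinduced_dom.mpr (Complex.continuous_ofReal.comp Hr_continuous)⟩

lemma HF_coe (x : ℝ) : HF ((x : ℝ) : AddCircle (2 * π)) = ((Hr x : ℝ) : ℂ) := rfl

instance fact_two_pi_pos : Fact (0 < 2 * π) := ⟨by positivity⟩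

lemma fourier_term (i : ℤ) (x : ℝ) :
    (fourier i ((x : ℝ) : AddCircle (2 * π)) : ℂ) = Complex.exp ((((i : ℝ) * x : ℝ) : ℂ) * Complex.I) := by
  rw [fourier_coe_apply]
  congr 1
  have hπ0 : (π : ℂ) ≠ 0 := Complex.ofReal_ne_zero.mpr Real.pi_ne_zero
  push_cast
  field_simp

/-- `b' j` is the `j`-th Fourier coefficient of `H` (real-valued). -/
noncomputable def b' (j : ℤ) : ℝ := Rn (j : ℝ) / (2 * π)

lemma fourierCoeff_HF (j : ℤ) : fourierCoeff (⇑HF) j = ((b' j : ℝ) : ℂ) := by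
  rw [fourierCoeff_eq_intervalIntegral (⇑HF) j (-π)]
  have hend : -π + 2 * π = π := by ring
  rw [hend]
  have hterm : ∀ x : ℝ, (fourier (-j) ((x : ℝ) : AddCircle (2*π))) • HF ((x:ℝ) : AddCircle (2*π))
      = ((Real.cos ((j:ℝ) * x) * Hr x : ℝ) : ℂ) + ((-(Real.sin ((j:ℝ) * x)) * Hr x : ℝ) : ℂ) * Complex.I := by
    intro x
    rw [smul_eq_mul, HF_coe, fourier_term, exp_ofReal_mul_I]
    have h1 : ((-j : ℤ) : ℝ) * x = -((j:ℝ) * x) := by push_cast; ring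
    rw [h1, Real.cos_neg, Real.sin_neg]
    push_cast
    ring
  have hsplit : (∫ x in (-π)..π, (fourier (-j) ((x : ℝ) : AddCircle (2*π))) • HF ((x:ℝ) : AddCircle (2*π)))
      = ((∫ x in (-π)..π, Real.cos ((j:ℝ) * x) * Hr x : ℝ) : ℂ)
        + ((∫ x in (-π)..π, -(Real.sin ((j:ℝ) * x)) * Hr x : ℝ) : ℂ) * Complex.I := by
    rw [intervalIntegral.integral_congr (g := fun x : ℝ =>
      ((Real.cos ((j:ℝ) * x) * Hr x : ℝ) : ℂ) + ((-(Real.sin ((j:ℝ) * x)) * Hr x : ℝ) : ℂ) * Complex.I)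
      (fun x _ => hterm x)]
    rw [intervalIntegral.integral_add, intervalIntegral.integral_mul_const,
      intervalIntegral.integral_ofReal, intervalIntegral.integral_ofReal]
    · have hc : Continuous fun x : ℝ => ((Real.cos ((j:ℝ) * x) * Hr x : ℝ) : ℂ) := by
        have := Hr_continuous; fun_prop
      exact hc.intervalIntegrable _ _
    · have hc : Continuous fun x : ℝ => ((-(Real.sin ((j:ℝ) * x)) * Hr x : ℝ) : ℂ) * Complex.I := by
        have := Hr_continuous; fun_prop
      exact hc.intervalIntegrable _ _
  have hodd : (∫ x in (-π)..π, -(Real.sin ((j:ℝ) * x)) * Hr x) = 0 := by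
    apply integral_odd_vanish
    · have := Hr_continuous; fun_prop
    · intro x
      rw [Hr_even, show (j:ℝ) * -x = -((j:ℝ)*x) by ring, Real.sin_neg]
      ring
  rw [hsplit, hodd]
  have hRn : (∫ x in (-π)..π, Real.cos ((j:ℝ) * x) * Hr x) = Rn (j:ℝ) := rfl
  rw [hRn]
  push_cast
  rw [b']
  have hπ0 : (π : ℂ) ≠ 0 := Complex.ofReal_ne_zero.mpr Real.pi_ne_zero
  push_cast
  field_simp
  simp only [Complex.real_smul, zero_mul, add_zero]
  push_cast
  field_simp

lemma b'_zero : b' 0 = a 0 := by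
  rw [b']
  norm_num [Rn_zero]
  rw [show a 0 = 3/4 from rfl]
  field_simp
  ring

lemma b'_neg (j : ℤ) : b' (-j) = b' j := by
  rw [b', b']
  rw [show ((-j : ℤ) : ℝ) = -(j:ℝ) by push_cast; ring, Rn_neg]

lemma b'_nat (n : ℕ) (hn : 1 ≤ n) : b' (n : ℤ) = a n / 2 := by
  have hπ := Real.pi_pos
  match n, hn with
  | 1, _ =>
    have hc : (((1:ℕ):ℤ):ℝ) = 1 := by push_cast; norm_num
    have h : Rn (1:ℝ) = 4/3 := by
      rw [Rn_eval (by norm_num) (by norm_num) (by norm_num) (by rw [one_mul, Real.sin_pi])]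
      rw [one_mul, Real.sin_pi_div_two]
      norm_num
    rw [b', hc, h, show a 1 = 4/(3*π) from rfl]
    field_simp
  | 2, _ =>
    have hc : (((2:ℕ):ℤ):ℝ) = 2 := by push_cast; norm_num
    rw [b', hc, Rn_two, show a 2 = -(1/4) from rfl]
    field_simp
  | (m+3), _ =>
    have hcast : (((m+3:ℕ) : ℤ) : ℝ) = ((m+3 : ℕ) : ℝ) := by push_cast; ring
    have h3 : (3:ℝ) ≤ ((m+3:ℕ):ℝ) := by push_cast; linarith [Nat.cast_nonneg (α := ℝ) m]
    have h0 : ((m+3:ℕ):ℝ) ≠ 0 := by linarith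
    have h2 : ((m+3:ℕ):ℝ) + 2 ≠ 0 := by linarith
    have h2' : ((m+3:ℕ):ℝ) - 2 ≠ 0 := by linarith
    have h4 : ((m+3:ℕ):ℝ)^2 - 4 ≠ 0 := by nlinarith
    have hπ' : Real.sin (((m+3:ℕ):ℝ) * π) = 0 := Real.sin_nat_mul_pi (m+3)
    rw [b', hcast, Rn_eval h0 h2 h2' hπ', a_succ3]
    rw [show ((m+3:ℕ):ℝ) * π / 2 = ((m+3:ℕ):ℝ) * (π/2) by ring]
    field_simp

lemma key_hasSum {θ : ℝ} (h1 : -(π/2) ≤ θ) (h2 : θ ≤ π/2) :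
    HasSum (fun k : ℕ => a (k+1) * Real.cos (((k+1 : ℕ) : ℝ) * θ)) (1/4) := by
  have hπ := Real.pi_pos
  have hsumnat : Summable (fun n : ℕ => b' (n : ℤ)) := by
    rw [← summable_nat_add_iff 1]
    have : Summable (fun n : ℕ => a (n+1) / 2) :=
      ((summable_nat_add_iff 1).mpr summable_a).div_const 2
    exact this.congr (fun n => (b'_nat (n+1) (by omega)).symm)
  have hsum_b : Summable (fun j : ℤ => ((b' j : ℝ) : ℂ)) := by
    rw [Complex.summable_ofReal]
    apply Summable.of_nat_of_neg hsumnat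
    exact hsumnat.congr (fun n => (b'_neg n).symm)
  have hsummable : Summable (fourierCoeff (⇑HF)) :=
    hsum_b.congr (fun j => (fourierCoeff_HF j).symm)
  have H := has_pointwise_sum_fourier_series_of_summable hsummable ((θ:ℝ) : AddCircle (2*π))
  have hval : HF ((θ:ℝ) : AddCircle (2*π)) = ((1:ℝ):ℂ) := by
    rw [HF_coe, Hr_one h1 h2]
  rw [hval] at H
  -- take real parts
  have Hre := Complex.reCLM.hasSum H
  simp only [Complex.reCLM_apply] at Hre
  have hterm : (fun i : ℤ => (fourierCoeff (⇑HF) i • fourier i ((θ:ℝ) : AddCircle (2*π))).re)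
      = fun i : ℤ => b' i * Real.cos ((i:ℝ)*θ) := by
    funext i
    rw [fourierCoeff_HF, smul_eq_mul, fourier_term, exp_ofReal_mul_I]
    have : ((b' i : ℝ) : ℂ) * (((Real.cos ((i:ℝ)*θ) : ℝ):ℂ) + ((Real.sin ((i:ℝ)*θ) : ℝ):ℂ) * Complex.I)
        = (((b' i * Real.cos ((i:ℝ)*θ) : ℝ)) : ℂ) + ((b' i * Real.sin ((i:ℝ)*θ) : ℝ):ℂ) * Complex.I := by
      push_cast; ring
    rw [this]
    simp only [Complex.add_re, Complex.mul_re, Complex.ofReal_re, Complex.ofReal_im,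
      Complex.I_re, Complex.I_im]
    ring
  rw [hterm, Complex.ofReal_re] at Hre
  -- Hre : HasSum (fun i : ℤ => b' i * cos (i θ)) 1
  have H2 := Hre.nat_add_neg
  have hcomb : (fun n : ℕ => b' (n:ℤ) * Real.cos (((n:ℤ):ℝ)*θ) + b' (-(n:ℤ)) * Real.cos (((((-(n:ℤ)) : ℤ)):ℝ)*θ))
      = fun n : ℕ => 2 * b' (n:ℤ) * Real.cos ((n:ℝ)*θ) := by
    funext n
    rw [b'_neg]
    rw [show (((((-(n:ℤ)) : ℤ)):ℝ)) = -(((n:ℤ)):ℝ) by push_cast; ring]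
    rw [show ((n:ℤ):ℝ) = (n:ℝ) by push_cast; ring]
    rw [show -(n:ℝ) * θ = -((n:ℝ)*θ) by ring, Real.cos_neg]
    ring
  rw [hcomb] at H2
  have H4 := (hasSum_nat_add_iff' 1).mpr H2
  have hfun : (fun n : ℕ => 2 * b' ((n+1:ℕ):ℤ) * Real.cos (((n+1:ℕ):ℝ)*θ))
      = fun k : ℕ => a (k+1) * Real.cos (((k+1:ℕ):ℝ)*θ) := by
    funext k
    rw [b'_nat (k+1) (by omega)]
    ring
  have hval4 : (1 : ℝ) + b' 0 * Real.cos (((0:ℤ):ℝ)*θ)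
      - ∑ i ∈ Finset.range 1, 2 * b' (i:ℤ) * Real.cos ((i:ℝ)*θ) = 1/4 := by
    rw [Finset.sum_range_one]
    norm_num [b'_zero, show a 0 = (3/4:ℝ) from rfl]
  rw [hfun, hval4] at H4
  exact H4

section FTlemmas

variable {f g : ℝ → ℝ}

lemma ft_integrand_integrable (hf : Integrable f) (w : ℝ) :
    Integrable (fun x : ℝ => (f x : ℂ) * Complex.exp (-(Complex.I * w * x))) := by
  have hb : Integrable (fun x : ℝ => Complex.exp (-(Complex.I * w * x)) * (f x : ℂ)) := by
    apply Integrable.bdd_mul (c := 1) hf.ofReal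
    · apply Continuous.aestronglyMeasurable
      fun_prop
    · refine Filter.Eventually.of_forall (fun x => ?_)
      have he : -(Complex.I * w * x) = ((-(w * x) : ℝ) : ℂ) * Complex.I := by push_cast; ring
      rw [he, Complex.norm_exp_ofReal_mul_I]
  exact hb.congr (Filter.Eventually.of_forall fun x => mul_comm _ _)

lemma FT_add (hf : Integrable f) (hg : Integrable g) (w : ℝ) :
    FT (fun x => f x + g x) w = FT f w + FT g w := by
  unfold FT
  rw [← mul_add, ← integral_add (ft_integrand_integrable hf w) (ft_integrand_integrable hg w)]
  congr 1
  apply MeasureTheory.integral_congr_ae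
  filter_upwards with x
  push_cast
  ring

lemma FT_const_mul (hf : Integrable f) (c w : ℝ) :
    FT (fun x => c * f x) w = (c : ℂ) * FT f w := by
  unfold FT
  rw [show (∫ x : ℝ, ((c * f x : ℝ) : ℂ) * Complex.exp (-(Complex.I * w * x)))
      = ∫ x : ℝ, (c:ℂ) * ((f x : ℂ) * Complex.exp (-(Complex.I * w * x))) by
    apply MeasureTheory.integral_congr_ae; filter_upwards with x; push_cast; ring]
  rw [MeasureTheory.integral_const_mul]
  ring

lemma FT_sum {ι : Type*} (s : Finset ι) (F : ι → ℝ → ℝ) (h : ∀ i ∈ s, Integrable (F i)) (w : ℝ) :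
    FT (fun x => ∑ i ∈ s, F i x) w = ∑ i ∈ s, FT (F i) w := by
  classical
  induction s using Finset.induction_on with
  | empty => simp [FT]
  | insert i s hnotmem ih =>
    simp only [Finset.sum_insert hnotmem]
    have h1 : Integrable (F i) := h i (Finset.mem_insert_self i s)
    have h2 : Integrable (fun x => ∑ j ∈ s, F j x) :=
      integrable_finset_sum s (fun j hj => h j (Finset.mem_insert_of_mem hj))
    rw [show (fun x => F i x + ∑ j ∈ s, F j x) = fun x => F i x + (fun y => ∑ j ∈ s, F j y) x from rfl]
    rw [FT_add h1 h2 w, ih (fun j hj => h j (Finset.mem_insert_of_mem hj))]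

lemma FT_shift (hf : Integrable f) (c w : ℝ) :
    FT (fun x => f (x + c)) w = Complex.exp (Complex.I * w * c) * FT f w := by
  unfold FT
  have key : (∫ x : ℝ, ((f (x + c) : ℝ) : ℂ) * Complex.exp (-(Complex.I * w * x)))
      = ∫ x : ℝ, (fun y : ℝ => ((f y : ℝ) : ℂ) * Complex.exp (-(Complex.I * w * y))
          * Complex.exp (Complex.I * w * c)) (x + c) := by
    apply MeasureTheory.integral_congr_ae
    filter_upwards with x
    show ((f (x + c) : ℝ) : ℂ) * Complex.exp (-(Complex.I * w * x))
        = ((f (x + c) : ℝ) : ℂ) * Complex.exp (-(Complex.I * w * ((x : ℝ) + (c : ℝ) : ℝ)))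
          * Complex.exp (Complex.I * w * c)
    conv_rhs => rw [mul_assoc, ← Complex.exp_add]
    congr 2
    push_cast
    ring
  rw [key, integral_add_right_eq_self
    (fun y : ℝ => ((f y : ℝ) : ℂ) * Complex.exp (-(Complex.I * w * y))
      * Complex.exp (Complex.I * w * c)) c, MeasureTheory.integral_mul_const]
  ring

lemma FT_shift_neg (hf : Integrable f) (c w : ℝ) :
    FT (fun x => f (x - c)) w = Complex.exp (-(Complex.I * w * c)) * FT f w := by
  have heq : (fun x : ℝ => f (x - c)) = (fun x : ℝ => f (x + -c)) :=
    funext fun x => by rw [sub_eq_add_neg]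
  rw [heq, FT_shift hf (-c) w]
  congr 2
  push_cast
  ring

end FTlemmas

lemma FT_eq_fourierIntegral (f : ℝ → ℝ) (w : ℝ) :
    FT f w = ((1 / Real.sqrt (2 * π) : ℝ) : ℂ)
      * FourierTransform.fourier (fun x : ℝ => (f x : ℂ)) (w / (2 * π)) := by
  have hπC : ((π:ℝ) : ℂ) ≠ 0 := Complex.ofReal_ne_zero.mpr Real.pi_ne_zero
  rw [Real.fourier_real_eq_integral_exp_smul, FT]
  congr 1
  · push_cast; ring
  · apply MeasureTheory.integral_congr_ae
    filter_upwards with x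
    rw [smul_eq_mul, mul_comm]
    congr 1
    congr 1
    push_cast
    field_simp

lemma FT_continuous {f : ℝ → ℝ} (hf : Integrable f) : Continuous (FT f) := by
  have h : Continuous (FourierTransform.fourier (fun x : ℝ => (f x : ℂ))) :=
    VectorFourier.fourierIntegral_continuous Real.continuous_fourierChar
      (by simp only [innerₗ_apply_apply]; exact continuous_inner) hf.ofReal
  have he : FT f = fun w => ((1 / Real.sqrt (2 * π) : ℝ) : ℂ)
      * FourierTransform.fourier (fun x : ℝ => (f x : ℂ)) (w / (2 * π)) :=
    funext fun w => FT_eq_fourierIntegral f w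
  rw [he]
  exact continuous_const.mul (h.comp (continuous_id.div_const _))

lemma integral_FT (φ : ℝ → ℝ) (hcont : Continuous φ) (hint : Integrable φ)
    (hFTint : Integrable (FT φ)) :
    ∫ w : ℝ, FT φ w = ((Real.sqrt (2 * π) * φ 0 : ℝ) : ℂ) := by
  have h2π : (0:ℝ) < 2 * π := by positivity
  have hs : (0:ℝ) < Real.sqrt (2 * π) := Real.sqrt_pos.mpr h2π
  have hgi : Integrable (fun x : ℝ => (φ x : ℂ)) := hint.ofReal
  have hrel : ∀ ξ : ℝ, FourierTransform.fourier (fun x : ℝ => (φ x : ℂ)) ξ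
      = ((Real.sqrt (2 * π) : ℝ) : ℂ) * FT φ (2 * π * ξ) := by
    intro ξ
    rw [FT_eq_fourierIntegral φ (2 * π * ξ), show 2 * π * ξ / (2 * π) = ξ by field_simp,
      ← mul_assoc, show ((Real.sqrt (2 * π) : ℝ) : ℂ) * ((1 / Real.sqrt (2 * π) : ℝ) : ℂ) = 1 by
        rw [← Complex.ofReal_mul, show Real.sqrt (2 * π) * (1 / Real.sqrt (2 * π)) = 1 by
          field_simp, Complex.ofReal_one], one_mul]
  have h𝓕int : Integrable (FourierTransform.fourier (fun x : ℝ => (φ x : ℂ))) := by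
    have h1 : Integrable (fun ξ : ℝ => FT φ (2 * π * ξ)) :=
      (integrable_comp_mul_left_iff (FT φ) (ne_of_gt h2π)).mpr hFTint
    exact (h1.const_mul _).congr (Filter.Eventually.of_forall fun ξ => (hrel ξ).symm)
  have hinv : FourierTransformInv.fourierInv (FourierTransform.fourier (fun x : ℝ => (φ x : ℂ))) 0
      = ((φ 0 : ℝ) : ℂ) :=
    MeasureTheory.Integrable.fourierInv_fourier_eq hgi h𝓕int
      ((Complex.continuous_ofReal.comp hcont).continuousAt)
  have hat0 : FourierTransformInv.fourierInv (FourierTransform.fourier (fun x : ℝ => (φ x : ℂ))) 0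
      = ∫ ξ, FourierTransform.fourier (fun x : ℝ => (φ x : ℂ)) ξ := by
    rw [Real.fourierInv_eq]
    simp
  have hint2 : (∫ ξ, FourierTransform.fourier (fun x : ℝ => (φ x : ℂ)) ξ)
      = ((Real.sqrt (2 * π) : ℝ) : ℂ) * (((2 * π)⁻¹ : ℝ) • ∫ w, FT φ w) := by
    rw [MeasureTheory.integral_congr_ae (Filter.Eventually.of_forall hrel), MeasureTheory.integral_const_mul,
      MeasureTheory.Measure.integral_comp_mul_left (FT φ) (2 * π), abs_of_pos (by positivity)]
  have hE : ((φ 0 : ℝ) : ℂ)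
      = ((Real.sqrt (2 * π) : ℝ) : ℂ) * (((2 * π)⁻¹ : ℝ) • ∫ w, FT φ w) := by
    rw [← hint2, ← hat0, hinv]
  rw [Complex.real_smul] at hE
  have hsq : ((Real.sqrt (2 * π) : ℝ) : ℂ) * ((Real.sqrt (2 * π) : ℝ) : ℂ) = ((2 * π : ℝ) : ℂ) := by
    rw [← Complex.ofReal_mul, Real.mul_self_sqrt h2π.le]
  have h2πC : ((2 * π : ℝ) : ℂ) ≠ 0 := Complex.ofReal_ne_zero.mpr (ne_of_gt h2π)
  have hinvC : (((2 * π)⁻¹ : ℝ) : ℂ) = (((2 * π : ℝ) : ℂ))⁻¹ := by push_cast; ring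
  rw [hinvC] at hE
  calc ∫ w, FT φ w
      = ((2 * π : ℝ) : ℂ) * (((2 * π : ℝ) : ℂ))⁻¹ * ∫ w, FT φ w := by
        rw [mul_inv_cancel₀ h2πC, one_mul]
    _ = ((Real.sqrt (2 * π) : ℝ) : ℂ)
        * (((Real.sqrt (2 * π) : ℝ) : ℂ) * ((((2 * π : ℝ) : ℂ))⁻¹ * ∫ w, FT φ w)) := by
        rw [← hsq]; ring
    _ = ((Real.sqrt (2 * π) : ℝ) : ℂ) * ((φ 0 : ℝ) : ℂ) := by rw [← hE]
    _ = ((Real.sqrt (2 * π) * φ 0 : ℝ) : ℂ) := by push_cast; ring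

lemma integral_FT_re (φ : ℝ → ℝ) (hcont : Continuous φ) (hint : Integrable φ)
    (hFTint : Integrable (FT φ)) :
    ∫ w : ℝ, (FT φ w).re = Real.sqrt (2 * π) * φ 0 := by
  have h := integral_re hFTint
  rw [integral_FT φ hcont hint hFTint] at h
  simpa using h

lemma FT_Pn (φ : ℝ → ℝ) (hint : Integrable φ) (lam : ℝ) (n : ℕ) (w : ℝ) :
    FT (Pn φ lam n) w
      = ((2 * An φ lam n + ∑ k ∈ Finset.Icc 1 n, a k * (2 * Real.cos (w * (lam * k))) : ℝ) : ℂ)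
        * FT φ w := by
  have hsummand : ∀ k ∈ Finset.Icc 1 n,
      Integrable (fun x => a k * (φ (x + lam * k) + φ (x - lam * k))) :=
    fun k _ => (((hint.comp_add_right _).add (hint.comp_sub_right _)).const_mul _)
  rw [show Pn φ lam n = fun x => (2 * An φ lam n) * φ x
      + (fun y => ∑ k ∈ Finset.Icc 1 n, a k * (φ (y + lam * k) + φ (y - lam * k))) x from rfl]
  rw [FT_add (hint.const_mul _) (integrable_finset_sum _ hsummand) w,
    FT_const_mul hint _ w,
    FT_sum (Finset.Icc 1 n) (fun k => fun x => a k * (φ (x + lam * k) + φ (x - lam * k)))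
      hsummand w]
  have hterm : ∀ k ∈ Finset.Icc 1 n,
      FT (fun x => a k * (φ (x + lam * k) + φ (x - lam * k))) w
        = ((a k * (2 * Real.cos (w * (lam * k))) : ℝ) : ℂ) * FT φ w := by
    intro k _
    rw [FT_const_mul (f := fun x => φ (x + lam * k) + φ (x - lam * k))
      ((hint.comp_add_right _).add (hint.comp_sub_right _)) (a k) w]
    rw [show (fun x => φ (x + lam * k) + φ (x - lam * k))
        = fun x => (fun y => φ (y + lam * k)) x + (fun y => φ (y - lam * k)) x from rfl]
    rw [FT_add (hint.comp_add_right _) (hint.comp_sub_right _) w,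
      FT_shift hint _ w, FT_shift_neg hint _ w]
    have hcos : Complex.exp (Complex.I * w * ((lam * (k:ℝ) : ℝ) : ℂ))
        + Complex.exp (-(Complex.I * w * ((lam * (k:ℝ) : ℝ) : ℂ)))
        = ((2 * Real.cos (w * (lam * k)) : ℝ) : ℂ) := by
      rw [show Complex.I * w * ((lam * (k:ℝ) : ℝ) : ℂ)
          = ((w * (lam * (k:ℝ)) : ℝ) : ℂ) * Complex.I by push_cast; ring]
      rw [show -(((w * (lam * (k:ℝ)) : ℝ) : ℂ) * Complex.I)
          = ((-(w * (lam * (k:ℝ))) : ℝ) : ℂ) * Complex.I by push_cast; ring]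
      rw [exp_ofReal_mul_I, exp_ofReal_mul_I, Real.cos_neg, Real.sin_neg]
      push_cast
      ring
    rw [← add_mul, hcos]
    push_cast
    ring
  rw [Finset.sum_congr rfl hterm, ← Finset.sum_mul]
  push_cast
  ring

lemma FT_Pn_re (φ : ℝ → ℝ) (hint : Integrable φ) (hFTreal : ∀ w : ℝ, (FT φ w).im = 0)
    (lam : ℝ) (n : ℕ) (w : ℝ) :
    (FT (Pn φ lam n) w).re
      = (2 * An φ lam n + ∑ k ∈ Finset.Icc 1 n, a k * (2 * Real.cos (w * (lam * k))))
        * (FT φ w).re := by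
  rw [FT_Pn φ hint lam n w]
  have h : FT φ w = (((FT φ w).re : ℝ) : ℂ) := by
    apply Complex.ext
    · simp
    · simp [hFTreal w]
  rw [h, ← Complex.ofReal_mul, Complex.ofReal_re, Complex.ofReal_re]

lemma sum_range_eq_Icc (n : ℕ) (g : ℕ → ℝ) :
    ∑ i ∈ Finset.range n, g (i + 1) = ∑ k ∈ Finset.Icc 1 n, g k := by
  induction n with
  | zero => simp
  | succ m ih => rw [Finset.sum_range_succ, ih, Finset.sum_Icc_succ_top (by omega)]

theorem min_signed_mass_of_Pn_hat_small
    (φ : ℝ → ℝ) (heven : ∀ x, φ (-x) = φ x) (hcont : Continuous φ)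
    (hint : Integrable φ) (hφ0 : φ 0 = 1)
    (hFTreal : ∀ w : ℝ, (FT φ w).im = 0)
    (hFTnonneg : ∀ w : ℝ, 0 ≤ (FT φ w).re)
    (hFTint : Integrable (FT φ))
    (hFTanalytic : AnalyticOnNhd ℝ (fun w => (FT φ w).re) Set.univ)
    (lam : ℝ) (hlam : 0 < lam) (n : ℕ) (hn : 0 < n)
    (r : ℝ) (hr0 : 0 < r) (hr : r ≤ Real.pi / (2 * lam)) :
    min (∫ w in (-r)..r, max (-(FT (Pn φ lam n) w).re) 0)
        (∫ w in (-r)..r, max ((FT (Pn φ lam n) w).re) 0) ≤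
      4 * Real.sqrt (2 * Real.pi) * ∑' k : ℕ, |a (n + 1 + k)| := by
  classical
  have hπ := Real.pi_pos
  have hrr : -r ≤ r := by linarith
  have htail_sum : Summable (fun k : ℕ => |a (n + 1 + k)|) := by
    have h0 := (summable_nat_add_iff (n+1)).mpr summable_abs_a
    exact h0.congr (fun k => by rw [add_comm k (n+1)])
  set t := ∑' k : ℕ, |a (n + 1 + k)| with ht
  have ht0 : 0 ≤ t := tsum_nonneg (fun k => abs_nonneg _)
  have hφh_cont : Continuous (fun w : ℝ => (FT φ w).re) :=
    Complex.continuous_re.comp (FT_continuous hint)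
  have hφh_int : Integrable (fun w : ℝ => (FT φ w).re) := hFTint.re
  have hφh_total : (∫ w : ℝ, (FT φ w).re) = Real.sqrt (2*π) := by
    rw [integral_FT_re φ hcont hint hFTint, hφ0, mul_one]
  have hsummand : ∀ k ∈ Finset.Icc 1 n,
      Integrable (fun x => a k * (φ (x + lam*k) + φ (x - lam*k))) :=
    fun k _ => (((hint.comp_add_right _).add (hint.comp_sub_right _)).const_mul _)
  have hPn_int : Integrable (Pn φ lam n) := by
    rw [show Pn φ lam n = fun x => (2 * An φ lam n) * φ x
      + (fun y => ∑ k ∈ Finset.Icc 1 n, a k * (φ (y + lam*k) + φ (y - lam*k))) x from rfl]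
    exact (hint.const_mul _).add (integrable_finset_sum _ hsummand)
  have hG_cont : Continuous (fun w : ℝ => (FT (Pn φ lam n) w).re) :=
    Complex.continuous_re.comp (FT_continuous hPn_int)
  have hlr : lam * r ≤ π / 2 := by
    have h := mul_le_mul_of_nonneg_left hr (le_of_lt hlam)
    calc lam * r ≤ lam * (π / (2*lam)) := h
      _ = π/2 := by field_simp
  have htail_hs : ∀ w ∈ Set.Icc (-r) r,
      HasSum (fun m : ℕ => a (m + n + 1) * Real.cos (((m + n + 1 : ℕ) : ℝ) * (lam * w)))
        (1/4 - ∑ k ∈ Finset.Icc 1 n, a k * Real.cos ((k:ℝ) * (lam * w))) := by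
    intro w hw
    have hθ1 : -(π/2) ≤ lam * w := by nlinarith [hw.1, hlr]
    have hθ2 : lam * w ≤ π/2 := by nlinarith [hw.2, hlr]
    have h := key_hasSum hθ1 hθ2
    have h2 := (hasSum_nat_add_iff' n).mpr h
    rw [sum_range_eq_Icc n (fun k => a k * Real.cos ((k:ℝ) * (lam * w)))] at h2
    exact h2
  have hkey : ∀ w ∈ Set.Icc (-r) r, (FT (Pn φ lam n) w).re
      = 2 * (FT φ w).re * ((An φ lam n + 1/4)
        - ∑' m : ℕ, a (m + n + 1) * Real.cos (((m + n + 1 : ℕ) : ℝ) * (lam * w))) := by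
    intro w hw
    rw [FT_Pn_re φ hint hFTreal lam n w]
    have hsum_eq : ∑ k ∈ Finset.Icc 1 n, a k * (2 * Real.cos (w * (lam * k)))
        = 2 * ∑ k ∈ Finset.Icc 1 n, a k * Real.cos ((k:ℝ) * (lam * w)) := by
      rw [Finset.mul_sum]
      apply Finset.sum_congr rfl
      intro k _
      rw [show w * (lam * (k:ℝ)) = (k:ℝ) * (lam * w) by ring]
      ring
    rw [hsum_eq]
    have hts := (htail_hs w hw).tsum_eq
    have hS : ∑ k ∈ Finset.Icc 1 n, a k * Real.cos ((k:ℝ) * (lam * w))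
        = 1/4 - ∑' m : ℕ, a (m + n + 1) * Real.cos (((m + n + 1 : ℕ) : ℝ) * (lam * w)) := by
      linarith [hts]
    rw [hS]
    ring
  have hsummable_shift : Summable (fun m : ℕ => |a (m + n + 1)|) :=
    htail_sum.congr (fun k => by rw [show n + 1 + k = k + n + 1 from by omega])
  have hT_bound : ∀ w : ℝ,
      |∑' m : ℕ, a (m + n + 1) * Real.cos (((m + n + 1 : ℕ) : ℝ) * (lam * w))| ≤ t := by
    intro w
    have habs : ∀ m : ℕ, |a (m + n + 1) * Real.cos (((m + n + 1 : ℕ) : ℝ) * (lam * w))|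
        ≤ |a (m + n + 1)| := by
      intro m
      rw [abs_mul]
      nlinarith [Real.abs_cos_le_one ((((m + n + 1 : ℕ)):ℝ) * (lam * w)),
        abs_nonneg (a (m+n+1)), abs_nonneg (Real.cos ((((m + n + 1 : ℕ)):ℝ) * (lam * w)))]
    have hst : Summable (fun m : ℕ => |a (m + n + 1) * Real.cos (((m + n + 1 : ℕ) : ℝ) * (lam * w))|) :=
      Summable.of_nonneg_of_le (fun _ => abs_nonneg _) habs hsummable_shift
    calc |∑' m : ℕ, a (m + n + 1) * Real.cos (((m + n + 1 : ℕ) : ℝ) * (lam * w))|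
        ≤ ∑' m : ℕ, |a (m + n + 1) * Real.cos (((m + n + 1 : ℕ) : ℝ) * (lam * w))| := by
          simpa only [Real.norm_eq_abs] using
            norm_tsum_le_tsum_norm (f := fun m : ℕ => a (m + n + 1)
              * Real.cos (((m + n + 1 : ℕ) : ℝ) * (lam * w)))
              (by simpa only [Real.norm_eq_abs] using hst)
      _ ≤ ∑' m : ℕ, |a (m + n + 1)| := Summable.tsum_le_tsum habs hst hsummable_shift
      _ = t := by rw [ht]; exact tsum_congr fun k => by rw [show k + n + 1 = n + 1 + k from by omega]
  have hmain : ∀ G : ℝ → ℝ, Continuous G → (∀ w, 0 ≤ G w) →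
      (∀ w ∈ Set.Icc (-r) r, G w ≤ 2 * t * (FT φ w).re) →
      ∫ w in (-r)..r, G w ≤ 4 * Real.sqrt (2*π) * t := by
    intro G hGc hG0 hGle
    have h1 : ∫ w in (-r)..r, G w ≤ ∫ w in (-r)..r, 2 * t * (FT φ w).re :=
      intervalIntegral.integral_mono_on hrr (hGc.intervalIntegrable _ _)
        ((continuous_const.mul hφh_cont).intervalIntegrable _ _) hGle
    have h2 : (∫ w in (-r)..r, 2 * t * (FT φ w).re)
        = 2 * t * ∫ w in (-r)..r, (FT φ w).re := intervalIntegral.integral_const_mul _ _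
    have h3 : (∫ w in (-r)..r, (FT φ w).re) ≤ Real.sqrt (2*π) := by
      rw [intervalIntegral.integral_of_le hrr, ← hφh_total]
      exact setIntegral_le_integral hφh_int (Filter.Eventually.of_forall hFTnonneg)
    have h4 : (∫ w in (-r)..r, (FT φ w).re) ≥ 0 := by
      rw [intervalIntegral.integral_of_le hrr]
      apply setIntegral_nonneg measurableSet_Ioc
      intro x _
      exact hFTnonneg x
    nlinarith [Real.sqrt_nonneg (2*π)]
  rcases le_or_gt 0 (An φ lam n + 1/4) with hc | hc
  · refine le_trans (min_le_left _ _) (hmain (fun w => max (-(FT (Pn φ lam n) w).re) 0)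
      (hG_cont.neg.max continuous_const) (fun w => le_max_right _ _) ?_)
    intro w hw
    show max (-(FT (Pn φ lam n) w).re) 0 ≤ 2 * t * (FT φ w).re
    rw [hkey w hw]
    have hb := abs_le.mp (hT_bound w)
    have hφ0w := hFTnonneg w
    apply max_le
    · nlinarith [mul_nonneg hφ0w hc, mul_nonneg hφ0w (sub_nonneg.mpr hb.2)]
    · exact mul_nonneg (mul_nonneg (by norm_num) ht0) hφ0w
  · refine le_trans (min_le_right _ _) (hmain (fun w => max ((FT (Pn φ lam n) w).re) 0)
      (hG_cont.max continuous_const) (fun w => le_max_right _ _) ?_)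
    intro w hw
    show max ((FT (Pn φ lam n) w).re) 0 ≤ 2 * t * (FT φ w).re
    rw [hkey w hw]
    have hb := abs_le.mp (hT_bound w)
    have hφ0w := hFTnonneg w
    apply max_le
    · nlinarith [mul_nonneg hφ0w (by linarith [hb.1] : (0:ℝ) ≤ t + (∑' m : ℕ, a (m + n + 1) * Real.cos (((m + n + 1 : ℕ) : ℝ) * (lam * w)))),
        mul_nonneg hφ0w (le_of_lt (neg_pos.mpr hc))]
    · exact mul_nonneg (mul_nonneg (by norm_num) ht0) hφ0w
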